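/- arXiv:2306.15424 — 2 statements merged into one kernel-verified Lean document; each statement's English description precedes it below -/
import Mathlib

section
/- An open rectangle Ω = (0, L₂) × (0, L₁) ⊂ ℝ² with L₁ ≥ L₂ > 0 cannot be a uniform domain with constant C_U < L₁ / L₂; that is, any uniform-domain constant C_U for Ω satisfies C_U ≥ L₁/L₂. -/
open Set Metric

noncomputable def pt (x y : ℝ) : EuclideanSpace ℝ (Fin 2) := (WithLp.equiv 2 (Fin 2 → ℝ)).symm ![x, y]

@[simp] lemma pt0 (x y : ℝ) : pt x y 0 = x := rfl
@[simp] lemma pt1 (x y : ℝ) : pt x y 1 = y := rfl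

lemma coord_dist (i : Fin 2) (p q : EuclideanSpace ℝ (Fin 2)) : |p i - q i| ≤ dist p q := by
  rw [EuclideanSpace.dist_eq]
  have h : |p i - q i| = Real.sqrt ((p i - q i)^2) := (Real.sqrt_sq_eq_abs _).symm
  rw [h]
  apply Real.sqrt_le_sqrt
  have := Finset.single_le_sum (f := fun j => (p j - q j)^2) (fun j _ => sq_nonneg _) (Finset.mem_univ i)
  simpa [Real.dist_eq, sq_abs] using this

lemma dist_snd_eq (p q : EuclideanSpace ℝ (Fin 2)) (h : p 1 = q 1) :
    dist p q = |p 0 - q 0| := by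
  rw [EuclideanSpace.dist_eq, Fin.sum_univ_two, h]
  simp [Real.dist_eq, sq_abs, Real.sqrt_sq_eq_abs]

lemma cont_coord (i : Fin 2) : Continuous fun x : EuclideanSpace ℝ (Fin 2) => x i :=
  (EuclideanSpace.proj i).continuous

/-- `Ω` is a uniform (Jones) domain with constant `C`. -/
def IsUniformDomain (Ω : Set (EuclideanSpace ℝ (Fin 2))) (C : ℝ) : Prop :=
  0 < C ∧
  ∀ a ∈ closure Ω, ∀ b ∈ closure Ω,
    ∃ (l : ℝ) (γ : ℝ → EuclideanSpace ℝ (Fin 2)),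
      0 ≤ l ∧ γ 0 = a ∧ γ l = b ∧
      (∀ t ∈ Set.Icc 0 l, γ t ∈ closure Ω) ∧
      (∀ s ∈ Set.Icc 0 l, ∀ t ∈ Set.Icc 0 l, dist (γ s) (γ t) ≤ |s - t|) ∧
      l ≤ C * dist a b ∧
      (∀ t ∈ Set.Icc 0 l,
        min (dist (γ t) a) (dist (γ t) b) ≤ C * infDist (γ t) (frontier Ω))

theorem stmt10 (L₁ L₂ : ℝ) (h2 : 0 < L₂) (h12 : L₂ ≤ L₁) (C : ℝ)
    (hU : IsUniformDomain
      {x : EuclideanSpace ℝ (Fin 2) | x 0 ∈ Set.Ioo 0 L₂ ∧ x 1 ∈ Set.Ioo 0 L₁} C) :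
    L₁ / L₂ ≤ C := by
  obtain ⟨hC, hUni⟩ := hU
  set Ω : Set (EuclideanSpace ℝ (Fin 2)) :=
    {x | x 0 ∈ Set.Ioo 0 L₂ ∧ x 1 ∈ Set.Ioo 0 L₁} with hΩ
  have h1 : 0 < L₁ := lt_of_lt_of_le h2 h12
  by_contra hcon
  push_neg at hcon
  have hCL : C * L₂ < L₁ := (lt_div_iff₀ h2).mp hcon
  set ε : ℝ := (L₁ - C * L₂) / 4 with hε
  have hεpos : 0 < ε := by
    have : 0 < L₁ - C * L₂ := by linarith
    positivity
  have hεlt : ε < L₁ / 2 := by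
    have : 0 < C * L₂ := mul_pos hC h2
    rw [hε]; linarith
  -- the endpoints
  have ha : pt (L₂/2) ε ∈ Ω := by
    constructor <;> constructor <;> simp <;> linarith
  have hb : pt (L₂/2) (L₁ - ε) ∈ Ω := by
    constructor <;> constructor <;> simp <;> linarith
  obtain ⟨l, γ, hl0, hγ0, hγl, hclos, hlip, -, hcig⟩ :=
    hUni _ (subset_closure ha) _ (subset_closure hb)
  -- Ω is open
  have hopen : IsOpen Ω := by
    have : Ω = (fun x : EuclideanSpace ℝ (Fin 2) => x 0) ⁻¹' (Set.Ioo 0 L₂) ∩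
        (fun x : EuclideanSpace ℝ (Fin 2) => x 1) ⁻¹' (Set.Ioo 0 L₁) := rfl
    rw [this]
    exact (isOpen_Ioo.preimage (cont_coord 0)).inter (isOpen_Ioo.preimage (cont_coord 1))
  -- the two boundary points at height L₁/2
  have hfront : ∀ x : ℝ, x = 0 ∨ x = L₂ → pt x (L₁/2) ∈ frontier Ω := by
    intro x hx
    rw [frontier, hopen.interior_eq]
    refine ⟨?_, ?_⟩
    · rw [Metric.mem_closure_iff]
      intro δ hδ
      set m : ℝ := min (δ/2) (L₂/2) with hm
      have hm0 : 0 < m := lt_min (by linarith) (by linarith)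
      have hmδ : m < δ := lt_of_le_of_lt (min_le_left _ _) (by linarith)
      have hmL : m < L₂ := lt_of_le_of_lt (min_le_right _ _) (by linarith)
      rcases hx with h | h
      · rw [h]
        refine ⟨pt m (L₁/2), ⟨⟨hm0, hmL⟩, by simp; linarith, by simp; linarith⟩, ?_⟩
        rw [dist_snd_eq _ _ (by simp)]
        simpa [abs_of_pos hm0] using hmδ
      · rw [h]
        refine ⟨pt (L₂ - m) (L₁/2), ⟨⟨by simp; linarith, by simp; linarith⟩,
          by simp; linarith, by simp; linarith⟩, ?_⟩
        rw [dist_snd_eq _ _ (by simp)]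
        simp only [pt0]
        rw [show L₂ - (L₂ - m) = m by ring, abs_of_pos hm0]
        exact hmδ
    · rcases hx with h | h <;> rw [h] <;> intro hmem
      · exact absurd hmem.1.1 (by simp)
      · exact absurd hmem.1.2 (by simp)
  -- closure of Ω is inside the closed rectangle
  have hsub : closure Ω ⊆ {x : EuclideanSpace ℝ (Fin 2) | x 0 ∈ Set.Icc 0 L₂} := by
    apply closure_minimal
    · intro x hx; exact ⟨hx.1.1.le, hx.1.2.le⟩
    · have : {x : EuclideanSpace ℝ (Fin 2) | x 0 ∈ Set.Icc 0 L₂} =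
          (fun x : EuclideanSpace ℝ (Fin 2) => x 0) ⁻¹' (Set.Icc 0 L₂) := rfl
      rw [this]; exact isClosed_Icc.preimage (cont_coord 0)
  -- IVT to find the midpoint-height time
  have hcont : ContinuousOn (fun t => γ t 1) (Set.Icc 0 l) := by
    apply LipschitzOnWith.continuousOn (K := 1)
    apply LipschitzOnWith.of_dist_le_mul
    intro s hs t ht
    rw [Real.dist_eq, Real.dist_eq, NNReal.coe_one, one_mul]
    exact (coord_dist 1 (γ s) (γ t)).trans (hlip s hs t ht)
  have hmem : L₁/2 ∈ Set.Icc ((fun t => γ t 1) 0) ((fun t => γ t 1) l) := by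
    simp only [hγ0, hγl, pt1]
    exact ⟨by linarith, by linarith⟩
  obtain ⟨t, ht, hft⟩ := intermediate_value_Icc hl0 hcont hmem
  -- estimates at γ t
  set p := γ t with hp
  have hp1 : p 1 = L₁/2 := hft
  have hp0 : p 0 ∈ Set.Icc 0 L₂ := hsub (hclos t ht)
  have hinf : infDist p (frontier Ω) ≤ L₂ / 2 := by
    rcases le_total (p 0) (L₂/2) with h | h
    · calc infDist p (frontier Ω) ≤ dist p (pt 0 (L₁/2)) :=
            infDist_le_dist_of_mem (hfront 0 (Or.inl rfl))
        _ = |p 0 - 0| := dist_snd_eq _ _ (by simp [hp1])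
        _ ≤ L₂/2 := by rw [sub_zero, abs_of_nonneg hp0.1]; exact h
    · calc infDist p (frontier Ω) ≤ dist p (pt L₂ (L₁/2)) :=
            infDist_le_dist_of_mem (hfront L₂ (Or.inr rfl))
        _ = |p 0 - L₂| := dist_snd_eq _ _ (by simp [hp1])
        _ ≤ L₂/2 := by rw [abs_of_nonpos (by linarith [hp0.2])]; linarith
  have hda : L₁/2 - ε ≤ dist p (pt (L₂/2) ε) := by
    have := coord_dist 1 p (pt (L₂/2) ε)
    rw [hp1, pt1] at this
    calc L₁/2 - ε ≤ |L₁/2 - ε| := le_abs_self _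
      _ ≤ _ := this
  have hdb : L₁/2 - ε ≤ dist p (pt (L₂/2) (L₁ - ε)) := by
    have := coord_dist 1 p (pt (L₂/2) (L₁ - ε))
    rw [hp1, pt1] at this
    calc L₁/2 - ε ≤ |L₁/2 - (L₁ - ε)| := by rw [abs_sub_comm]; exact le_abs_self _ |>.trans_eq (by ring_nf)
      _ ≤ _ := this
  have hkey := hcig t ht
  have h5 : L₁/2 - ε ≤ C * infDist p (frontier Ω) := le_trans (le_min hda hdb) hkey
  have h6 : C * infDist p (frontier Ω) ≤ C * (L₂/2) :=
    mul_le_mul_of_nonneg_left hinf hC.le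
  rw [hε] at h5
  nlinarith
end

section
/- Let A be a symmetric positive definite n×n matrix and M⁻¹ a symmetric positive definite preconditioner. Suppose there exists C₀ > 0 such that every v ∈ ℝⁿ admits a decomposition v = Σ_{j=0}^{N} R_jᵀ v_j with Σ_{j=0}^{N} v_jᵀ A_j v_j ≤ C₀² vᵀ A v, where A_j = R_j A R_jᵀ are SPD and M⁻¹ = Σ_{j=0}^{N} R_jᵀ A_j⁻¹ R_j. Then the smallest eigenvalue of M⁻¹A satisfies λ_min(M⁻¹A) ≥ C₀⁻². -/
open Matrix Finset

private lemma sum_mulVec' {ι m k : Type*} [Fintype m] [Fintype k] (s : Finset ι)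
    (M : ι → Matrix m k ℝ) (v : k → ℝ) :
    (∑ j ∈ s, M j) *ᵥ v = ∑ j ∈ s, M j *ᵥ v := by
  ext i
  simp [Matrix.mulVec, dotProduct, Finset.sum_apply, Matrix.sum_apply, Finset.sum_mul]
  rw [Finset.sum_comm]

private lemma sum_dotProduct' {ι m : Type*} [Fintype m] (s : Finset ι)
    (f : ι → m → ℝ) (w : m → ℝ) :
    (∑ j ∈ s, f j) ⬝ᵥ w = ∑ j ∈ s, f j ⬝ᵥ w := by
  simp [dotProduct, Finset.sum_apply, Finset.sum_mul]
  rw [Finset.sum_comm]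

private lemma dotProduct_sum' {ι m : Type*} [Fintype m] (s : Finset ι)
    (w : m → ℝ) (f : ι → m → ℝ) :
    w ⬝ᵥ (∑ j ∈ s, f j) = ∑ j ∈ s, w ⬝ᵥ f j := by
  rw [dotProduct_comm, sum_dotProduct']
  exact Finset.sum_congr rfl fun j _ => dotProduct_comm _ _

private lemma symm_dot {m : Type*} [Fintype m] {M : Matrix m m ℝ} (hM : Mᵀ = M)
    (x y : m → ℝ) : x ⬝ᵥ (M *ᵥ y) = y ⬝ᵥ (M *ᵥ x) := by
  rw [Matrix.dotProduct_mulVec, ← Matrix.mulVec_transpose, hM, dotProduct_comm]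

theorem stmt11 {n N : ℕ} (A : Matrix (Fin n) (Fin n) ℝ) (hA : A.PosDef)
    (nj : Fin (N + 1) → ℕ)
    (R : ∀ j : Fin (N + 1), Matrix (Fin (nj j)) (Fin n) ℝ)
    (hAj : ∀ j, (R j * A * (R j)ᵀ).PosDef)
    (C₀ : ℝ) (hC₀ : 0 < C₀)
    (hstable : ∀ v : Fin n → ℝ, ∃ vj : ∀ j : Fin (N + 1), Fin (nj j) → ℝ,
      v = ∑ j, (R j)ᵀ *ᵥ vj j ∧
      ∑ j, vj j ⬝ᵥ ((R j * A * (R j)ᵀ) *ᵥ vj j) ≤ C₀^2 * (v ⬝ᵥ (A *ᵥ v))) :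
    -- with  M⁻¹ = ∑ j Rjᵀ Aj⁻¹ Rj,  vᵀMv ≤ C₀² vᵀAv for all v,
    -- i.e. λ_min(M⁻¹A) ≥ C₀⁻²
    ∀ v : Fin n → ℝ,
      v ⬝ᵥ ((∑ j, (R j)ᵀ * (R j * A * (R j)ᵀ)⁻¹ * R j)⁻¹ *ᵥ v) ≤
        C₀^2 * (v ⬝ᵥ (A *ᵥ v)) := by
  classical
  set Aj : ∀ j : Fin (N + 1), Matrix (Fin (nj j)) (Fin (nj j)) ℝ :=
    fun j => R j * A * (R j)ᵀ with hAjdef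
  set B : Matrix (Fin n) (Fin n) ℝ := ∑ j, (R j)ᵀ * (Aj j)⁻¹ * R j with hBdef
  have hAjinv : ∀ j, (Aj j)⁻¹.PosDef := fun j => (hAj j).inv
  have hAjT : ∀ j, (Aj j)ᵀ = Aj j := fun j => by
    have := (hAj j).1
    rwa [Matrix.IsHermitian, conjTranspose_eq_transpose_of_trivial] at this
  have hAjinvT : ∀ j, ((Aj j)⁻¹)ᵀ = (Aj j)⁻¹ := fun j => by
    have := (hAjinv j).1
    rwa [Matrix.IsHermitian, conjTranspose_eq_transpose_of_trivial] at this
  have hAjunit : ∀ j, IsUnit (Aj j).det :=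
    fun j => (Matrix.isUnit_iff_isUnit_det _).mp (hAj j).isUnit
  -- quadratic form of B
  have hBq : ∀ x : Fin n → ℝ,
      x ⬝ᵥ (B *ᵥ x) = ∑ j, (R j *ᵥ x) ⬝ᵥ ((Aj j)⁻¹ *ᵥ (R j *ᵥ x)) := by
    intro x
    rw [hBdef, sum_mulVec', dotProduct_sum']
    refine Finset.sum_congr rfl fun j _ => ?_
    rw [← Matrix.mulVec_mulVec, ← Matrix.mulVec_mulVec,
      Matrix.dotProduct_mulVec x ((R j)ᵀ), Matrix.vecMul_transpose]
  -- each term of hBq is nonneg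
  have hterm_nonneg : ∀ (j) (y : Fin (nj j) → ℝ),
      0 ≤ y ⬝ᵥ ((Aj j)⁻¹ *ᵥ y) := fun j y => by
    simpa [star_trivial] using (hAjinv j).posSemidef.dotProduct_mulVec_nonneg y
  -- B is positive definite
  have hBherm : B.IsHermitian := by
    rw [hBdef]
    refine Finset.sum_induction _ _ (fun a b ha hb => ha.add hb) isHermitian_zero
      fun j _ => ?_
    have := Matrix.isHermitian_conjTranspose_mul_mul (R j) (hAjinv j).1
    rwa [conjTranspose_eq_transpose_of_trivial] at this
  have hBpd : B.PosDef := by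
    refine Matrix.PosDef.of_dotProduct_mulVec_pos hBherm fun x hx => ?_
    rw [star_trivial]
    have hnn : 0 ≤ x ⬝ᵥ (B *ᵥ x) := by
      rw [hBq]
      exact Finset.sum_nonneg fun j _ => hterm_nonneg j _
    rcases lt_or_eq_of_le hnn with h | h
    · exact h
    exfalso
    have hzero : ∀ j, R j *ᵥ x = 0 := by
      intro j
      by_contra hne
      have hall : ∀ j ∈ Finset.univ, (0:ℝ) ≤ (R j *ᵥ x) ⬝ᵥ ((Aj j)⁻¹ *ᵥ (R j *ᵥ x)) :=
        fun j _ => hterm_nonneg j _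
      have hj : (R j *ᵥ x) ⬝ᵥ ((Aj j)⁻¹ *ᵥ (R j *ᵥ x)) = 0 :=
        (Finset.sum_eq_zero_iff_of_nonneg hall).mp (by rw [← hBq, ← h]) j (Finset.mem_univ j)
      have := (hAjinv j).dotProduct_mulVec_pos (x := R j *ᵥ x) hne
      rw [star_trivial, hj] at this
      exact lt_irrefl _ this
    obtain ⟨vj, hdec, _⟩ := hstable x
    apply hx
    have hx2 : x ⬝ᵥ x = 0 := by
      have h1 : x ⬝ᵥ x = (∑ j, (R j)ᵀ *ᵥ vj j) ⬝ᵥ x := by rw [← hdec]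
      rw [h1, sum_dotProduct']
      refine Finset.sum_eq_zero fun j _ => ?_
      rw [Matrix.mulVec_transpose, ← Matrix.dotProduct_mulVec, hzero j, dotProduct_zero]
    ext i
    have := (Finset.sum_eq_zero_iff_of_nonneg
      (fun i (_ : i ∈ Finset.univ) => mul_self_nonneg (x i))).mp hx2 i (Finset.mem_univ i)
    simpa [mul_self_eq_zero] using this
  have hBunit : IsUnit B.det := (Matrix.isUnit_iff_isUnit_det _).mp hBpd.isUnit
  -- main argument
  intro v
  obtain ⟨vj, hdec, hsum⟩ := hstable v
  set w : Fin n → ℝ := B⁻¹ *ᵥ v with hw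
  set u : ∀ j, Fin (nj j) → ℝ := fun j => (Aj j)⁻¹ *ᵥ (R j *ᵥ w) with hu
  have hBw : B *ᵥ w = v := by
    rw [hw, Matrix.mulVec_mulVec, Matrix.mul_nonsing_inv _ hBunit, Matrix.one_mulVec]
  have hAu : ∀ j, Aj j *ᵥ u j = R j *ᵥ w := by
    intro j
    show Aj j *ᵥ ((Aj j)⁻¹ *ᵥ (R j *ᵥ w)) = R j *ᵥ w
    rw [Matrix.mulVec_mulVec, Matrix.mul_nonsing_inv _ (hAjunit j), Matrix.one_mulVec]
  -- S = v ⬝ᵥ B⁻¹ v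
  have h1 : v ⬝ᵥ (B⁻¹ *ᵥ v) = ∑ j, vj j ⬝ᵥ (Aj j *ᵥ u j) := by
    have h0 : v ⬝ᵥ (B⁻¹ *ᵥ v) = (∑ j, (R j)ᵀ *ᵥ vj j) ⬝ᵥ w := by rw [← hdec, hw]
    rw [h0, sum_dotProduct']
    refine Finset.sum_congr rfl fun j _ => ?_
    rw [Matrix.mulVec_transpose, ← Matrix.dotProduct_mulVec, hAu j]
  -- Young's inequality termwise
  have h2 : ∀ j, vj j ⬝ᵥ (Aj j *ᵥ u j) ≤
      (vj j ⬝ᵥ (Aj j *ᵥ vj j) + u j ⬝ᵥ (Aj j *ᵥ u j)) / 2 := by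
    intro j
    have hpsd : 0 ≤ (vj j - u j) ⬝ᵥ (Aj j *ᵥ (vj j - u j)) := by
      simpa [star_trivial] using (hAj j).posSemidef.dotProduct_mulVec_nonneg (vj j - u j)
    have hsymm : u j ⬝ᵥ (Aj j *ᵥ vj j) = vj j ⬝ᵥ (Aj j *ᵥ u j) :=
      symm_dot (hAjT j) _ _
    rw [Matrix.mulVec_sub, sub_dotProduct, dotProduct_sub, dotProduct_sub, hsymm] at hpsd
    linarith
  -- sum of u-energies equals S
  have h3 : ∑ j, u j ⬝ᵥ (Aj j *ᵥ u j) = v ⬝ᵥ (B⁻¹ *ᵥ v) := by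
    have hterm : ∀ j, u j ⬝ᵥ (Aj j *ᵥ u j) = (R j *ᵥ w) ⬝ᵥ ((Aj j)⁻¹ *ᵥ (R j *ᵥ w)) := by
      intro j
      rw [hAu j]
      exact dotProduct_comm _ _
    rw [Finset.sum_congr rfl fun j _ => hterm j, ← hBq, hBw, dotProduct_comm, hw]
  -- combine
  have key : v ⬝ᵥ (B⁻¹ *ᵥ v) ≤
      (∑ j, vj j ⬝ᵥ (Aj j *ᵥ vj j) + v ⬝ᵥ (B⁻¹ *ᵥ v)) / 2 := by
    calc v ⬝ᵥ (B⁻¹ *ᵥ v) = ∑ j, vj j ⬝ᵥ (Aj j *ᵥ u j) := h1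
    _ ≤ ∑ j, (vj j ⬝ᵥ (Aj j *ᵥ vj j) + u j ⬝ᵥ (Aj j *ᵥ u j)) / 2 :=
        Finset.sum_le_sum fun j _ => h2 j
    _ = (∑ j, vj j ⬝ᵥ (Aj j *ᵥ vj j) + ∑ j, u j ⬝ᵥ (Aj j *ᵥ u j)) / 2 := by
        rw [← Finset.sum_div, Finset.sum_add_distrib]
    _ = (∑ j, vj j ⬝ᵥ (Aj j *ᵥ vj j) + v ⬝ᵥ (B⁻¹ *ᵥ v)) / 2 := by rw [h3]
  have hfin : v ⬝ᵥ (B⁻¹ *ᵥ v) ≤ ∑ j, vj j ⬝ᵥ (Aj j *ᵥ vj j) := by linarith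
  exact hfin.trans hsum
end
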